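/- If dim H = n is finite, every maximal compatible subset of a star [S⟩_k in the Grassmannian G_k(H) contains precisely n−k+1 elements. -/

import Mathlib

open Module Submodule

def Compatible {H : Type*} [NormedAddCommGroup H] [InnerProductSpace ℂ H]
    (X Y : Submodule ℂ H) : Prop :=
  ∃ X' Y' Z : Submodule ℂ H, X' ⟂ Y' ∧ X' ⟂ Z ∧ Y' ⟂ Z ∧ X = X' ⊔ Z ∧ Y = Y' ⊔ Z

/-- A set of subspaces is compatible if any two distinct members are compatible. -/
def CompatibleSet {H : Type*} [NormedAddCommGroup H] [InnerProductSpace ℂ H]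
    (M : Set (Submodule ℂ H)) : Prop :=
  ∀ X ∈ M, ∀ Y ∈ M, X ≠ Y → Compatible X Y

section Aux
variable {H : Type*} [NormedAddCommGroup H] [InnerProductSpace ℂ H]

lemma compat_of_ortho {S L1 L2 : Submodule ℂ H} (h1 : L1 ≤ Sᗮ) (h2 : L2 ≤ Sᗮ)
    (h12 : L1 ⟂ L2) : Compatible (S ⊔ L1) (S ⊔ L2) :=
  ⟨L1, L2, S, h12, Submodule.isOrtho_iff_le.2 h1, Submodule.isOrtho_iff_le.2 h2,
    sup_comm _ _, sup_comm _ _⟩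

lemma Z_eq_inf {X' Y' Z : Submodule ℂ H} (hXY' : X' ⟂ Y') (hXZ : X' ⟂ Z) (hYZ : Y' ⟂ Z) :
    Z = (X' ⊔ Z) ⊓ (Y' ⊔ Z) := by
  apply le_antisymm (le_inf le_sup_right le_sup_right)
  intro v hv
  rw [Submodule.mem_inf] at hv
  obtain ⟨hvX, hvY⟩ := hv
  rw [Submodule.mem_sup] at hvX hvY
  obtain ⟨x, hx, z, hz, rfl⟩ := hvX
  obtain ⟨y, hy, z', hz', hE⟩ := hvY
  have hsub : x - y = z' - z := by
    have h : x + z = y + z' := hE.symm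
    linear_combination (norm := abel) h
  have hmem1 : x - y ∈ X' ⊔ Y' :=
    sub_mem (Submodule.mem_sup_left hx) (Submodule.mem_sup_right hy)
  have hmem2 : x - y ∈ Z := hsub ▸ sub_mem hz' hz
  have hdisj : Disjoint (X' ⊔ Y') Z := (Submodule.isOrtho_sup_left.2 ⟨hXZ, hYZ⟩).disjoint
  have h0 : x - y = 0 := Submodule.disjoint_def.mp hdisj _ hmem1 hmem2
  have hxy : x = y := sub_eq_zero.mp h0
  have hx0 : x = 0 := Submodule.disjoint_def.mp hXY'.disjoint _ hx (hxy ▸ hy)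
  simpa [hx0] using hz

end Aux

section Aux2
variable {H : Type*} [NormedAddCommGroup H] [InnerProductSpace ℂ H] [FiniteDimensional ℂ H]

/-- Decomposition of a member of the star. -/
lemma star_decomp (S X : Submodule ℂ H) (hSX : S ≤ X) : S ⊔ (Sᗮ ⊓ X) = X :=
  Submodule.sup_orthogonal_inf_of_hasOrthogonalProjection hSX

lemma star_line {k : ℕ} (hk1 : 1 ≤ k) {S X : Submodule ℂ H}
    (hS : finrank ℂ S = k - 1) (hSX : S ≤ X) (hX : finrank ℂ X = k) :
    finrank ℂ ↥(Sᗮ ⊓ X) = 1 := by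
  have h1 := Submodule.finrank_sup_add_finrank_inf_eq S (Sᗮ ⊓ X)
  have h2 : S ⊓ (Sᗮ ⊓ X) = ⊥ := by
    rw [← inf_assoc, Submodule.inf_orthogonal_eq_bot, bot_inf_eq]
  rw [star_decomp S X hSX, h2, hX, hS] at h1
  simp only [finrank_bot] at h1
  omega

/-- Compatibility of two distinct star members forces orthogonality of lines. -/
lemma compat_ortho_lines {n k : ℕ} (hk1 : 1 ≤ k) {S X Y : Submodule ℂ H}
    (hS : finrank ℂ S = k - 1) (hSX : S ≤ X) (hX : finrank ℂ X = k)
    (hSY : S ≤ Y) (hY : finrank ℂ Y = k) (hne : X ≠ Y) (hc : Compatible X Y) :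
    (Sᗮ ⊓ X) ⟂ (Sᗮ ⊓ Y) := by
  obtain ⟨X', Y', Z, hXY', hXZ, hYZ, hXe, hYe⟩ := hc
  have hZ : Z = X ⊓ Y := by rw [hXe, hYe]; exact Z_eq_inf hXY' hXZ hYZ
  -- X ⊓ Y = S
  have hXYS : X ⊓ Y = S := by
    symm
    apply Submodule.eq_of_le_of_finrank_eq (le_inf hSX hSY)
    have hlt : X ⊓ Y < X := by
      rcases lt_or_eq_of_le (inf_le_left : X ⊓ Y ≤ X) with h | h
      · exact h
      · exfalso
        apply hne
        exact Submodule.eq_of_le_of_finrank_eq (h ▸ inf_le_right) (by rw [hX, hY])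
    have h1 : finrank ℂ ↥(X ⊓ Y) < k := hX ▸ Submodule.finrank_lt_finrank_of_lt hlt
    have h2 : finrank ℂ S ≤ finrank ℂ ↥(X ⊓ Y) := Submodule.finrank_mono (le_inf hSX hSY)
    omega
  have hZS : Z = S := hZ.trans hXYS
  subst hZS
  -- X' = Sᗮ ⊓ X
  have key : ∀ W W' : Submodule ℂ H, W' ⟂ Z → Z ≤ W → finrank ℂ W = k → W = W' ⊔ Z →
      W' = Zᗮ ⊓ W := by
    intro W W' hWZ hZW hWk hWe
    apply Submodule.eq_of_le_of_finrank_eq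
    · exact le_inf (Submodule.isOrtho_iff_le.mp hWZ) (hWe ▸ le_sup_left)
    · rw [star_line hk1 hS hZW hWk]
      have h1 := Submodule.finrank_sup_add_finrank_inf_eq W' Z
      rw [← hWe, (hWZ.disjoint).eq_bot, hWk, hS] at h1
      simp only [finrank_bot] at h1
      omega
  rw [key X X' hXZ hSX hX hXe, key Y Y' hYZ hSY hY hYe] at hXY'
  exact hXY'

end Aux2

theorem stmt_8 {H : Type*} [NormedAddCommGroup H] [InnerProductSpace ℂ H]
    [FiniteDimensional ℂ H] {n k : ℕ} (hn : Module.finrank ℂ H = n)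
    (hk1 : 1 ≤ k) (hkn : k ≤ n)
    (S : Submodule ℂ H) (hS : Module.finrank ℂ S = k - 1)
    (M : Set (Submodule ℂ H))
    (hMstar : ∀ X ∈ M, S ≤ X ∧ Module.finrank ℂ X = k)
    (hMcomp : CompatibleSet M)
    (hmax : ∀ M' : Set (Submodule ℂ H),
      (∀ X ∈ M', S ≤ X ∧ Module.finrank ℂ X = k) → CompatibleSet M' → M ⊆ M' → M' = M) :
    M.ncard = n - k + 1 := by
  classical
  have hdS : finrank ℂ S + finrank ℂ Sᗮ = finrank ℂ H :=
    Submodule.finrank_add_finrank_orthogonal S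
  -- choose a unit vector in each line Sᗮ ⊓ X
  have hex : ∀ X : ↑M, ∃ v : H, ‖v‖ = 1 ∧ v ∈ Sᗮ ⊓ (X : Submodule ℂ H) ∧
      (ℂ ∙ v) = Sᗮ ⊓ (X : Submodule ℂ H) := by
    rintro ⟨X, hX⟩
    obtain ⟨hSX, hXk⟩ := hMstar X hX
    have hline : finrank ℂ ↥(Sᗮ ⊓ X) = 1 := star_line hk1 hS hSX hXk
    have hne : Sᗮ ⊓ X ≠ ⊥ := by
      intro hbot
      rw [hbot] at hline
      simp [finrank_bot] at hline
    obtain ⟨w, hw, hw0⟩ := Submodule.exists_mem_ne_zero_of_ne_bot hne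
    refine ⟨(‖w‖ : ℂ)⁻¹ • w, ?_, Submodule.smul_mem _ _ hw, ?_⟩
    · simp only [norm_smul, norm_inv, Complex.norm_real, norm_norm]
      exact inv_mul_cancel₀ (norm_ne_zero_iff.2 hw0)
    · have hu0 : (‖w‖ : ℂ)⁻¹ • w ≠ 0 := by
        simp [smul_eq_zero, hw0, norm_eq_zero, Complex.ofReal_eq_zero]
      apply Submodule.eq_of_le_of_finrank_eq
      · rw [Submodule.span_singleton_le_iff_mem]
        exact Submodule.smul_mem _ _ hw
      · rw [finrank_span_singleton hu0, hline]
  choose g hg1 hg2 hg3 using hex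
  have horth : Orthonormal ℂ g := by
    refine ⟨hg1, fun i j hij => ?_⟩
    have hij' : (i : Submodule ℂ H) ≠ (j : Submodule ℂ H) := fun h => hij (Subtype.ext h)
    have hc := hMcomp _ i.2 _ j.2 hij'
    obtain ⟨hSi, hik⟩ := hMstar _ i.2
    obtain ⟨hSj, hjk⟩ := hMstar _ j.2
    exact (compat_ortho_lines (n := n) hk1 hS hSi hik hSj hjk hij' hc).inner_eq
      (hg2 i) (hg2 j)
  have hlin := horth.linearIndependent
  have hfin : Finite ↑M := hlin.finite
  haveI : Fintype ↑M := Fintype.ofFinite _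
  set T : Submodule ℂ H := Submodule.span ℂ (Set.range g) with hT
  have hTle : T ≤ Sᗮ := by
    rw [hT, Submodule.span_le]
    rintro _ ⟨i, rfl⟩
    exact (hg2 i).1
  have hlineT : ∀ i : ↑M, Sᗮ ⊓ (i : Submodule ℂ H) ≤ T := by
    intro i
    rw [← hg3 i, Submodule.span_singleton_le_iff_mem]
    exact Submodule.subset_span (Set.mem_range_self i)
  have hTeq : T = Sᗮ := by
    by_contra hne'
    have hfr : finrank ℂ T < finrank ℂ Sᗮ :=
      Submodule.finrank_lt_finrank_of_lt (lt_of_le_of_ne hTle hne')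
    have hW : Tᗮ ⊓ Sᗮ ≠ ⊥ := by
      intro hbot
      have h1 := Submodule.finrank_sup_add_finrank_inf_eq Tᗮ Sᗮ
      rw [hbot] at h1
      simp only [finrank_bot, add_zero] at h1
      have hTc : finrank ℂ T + finrank ℂ Tᗮ = finrank ℂ H :=
        T.finrank_add_finrank_orthogonal
      have hsup : finrank ℂ ↥(Tᗮ ⊔ Sᗮ) ≤ finrank ℂ H := Submodule.finrank_le _
      omega
    obtain ⟨v, hv, hv0⟩ := Submodule.exists_mem_ne_zero_of_ne_bot hW
    rw [Submodule.mem_inf] at hv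
    obtain ⟨hvT, hvS⟩ := hv
    set X₀ : Submodule ℂ H := S ⊔ (ℂ ∙ v) with hX₀
    have hvspan : (ℂ ∙ v) ≤ Sᗮ := by rwa [Submodule.span_singleton_le_iff_mem]
    have hX₀S : S ≤ X₀ := le_sup_left
    have hX₀k : finrank ℂ X₀ = k := by
      have h1 := Submodule.finrank_sup_add_finrank_inf_eq S (ℂ ∙ v)
      have h2 : S ⊓ (ℂ ∙ v) = ⊥ :=
        ((Submodule.orthogonal_disjoint S).mono_right hvspan).eq_bot
      rw [h2, hS, finrank_span_singleton hv0] at h1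
      simp only [finrank_bot, add_zero] at h1
      rw [hX₀]
      omega
    -- v is orthogonal to every line of M
    have hvortho : ∀ i : ↑M, (ℂ ∙ v) ⟂ (Sᗮ ⊓ (i : Submodule ℂ H)) := by
      intro i
      rw [Submodule.isOrtho_iff_le, Submodule.span_singleton_le_iff_mem]
      exact Submodule.orthogonal_le (hlineT i) hvT
    have hM' : insert X₀ M = M := by
      apply hmax
      · rintro X (rfl | hX)
        · exact ⟨hX₀S, hX₀k⟩
        · exact hMstar X hX
      · rintro A (rfl | hA) B (rfl | hB) hAB
        · exact absurd rfl hAB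
        · obtain ⟨hSB, hBk⟩ := hMstar B hB
          have := compat_of_ortho hvspan (inf_le_left : Sᗮ ⊓ B ≤ Sᗮ) (hvortho ⟨B, hB⟩)
          rwa [star_decomp S B hSB] at this
        · obtain ⟨hSA, hAk⟩ := hMstar A hA
          have := compat_of_ortho (inf_le_left : Sᗮ ⊓ A ≤ Sᗮ) hvspan
            (hvortho ⟨A, hA⟩).symm
          rwa [star_decomp S A hSA] at this
        · exact hMcomp A hA B hB hAB
      · exact Set.subset_insert _ _
    have hX₀M : X₀ ∈ M := hM' ▸ Set.mem_insert X₀ M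
    have hlineX₀ : (ℂ ∙ v) = Sᗮ ⊓ X₀ := by
      apply Submodule.eq_of_le_of_finrank_eq (le_inf hvspan le_sup_right)
      rw [finrank_span_singleton hv0, star_line hk1 hS hX₀S hX₀k]
    have hvT' : v ∈ T :=
      hlineT ⟨X₀, hX₀M⟩ (hlineX₀ ▸ Submodule.mem_span_singleton_self v)
    exact hv0 (Submodule.disjoint_def.mp T.orthogonal_disjoint v hvT' hvT)
  have hcard : finrank ℂ T = Fintype.card ↑M := finrank_span_eq_card hlin
  have hncard : M.ncard = Fintype.card ↑M := by
    rw [← Nat.card_coe_set_eq, Nat.card_eq_fintype_card]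
  rw [hncard, ← hcard, hTeq]
  rw [hn, hS] at hdS
  omega
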